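/- For a positive integer m, a complex number b such that m - b is not a positive integer, and complex z with 0 < |z| < 1, one has F(1,b;m;z) = (m-1)! · (-z)^{1-m} / (1-b)_{m-1} · [ (1-z)^{m-b-1} - ∑_{k=0}^{m-2} (b-m+1)_k / k! · z^k ]. -/

import Mathlib

/-- Pochhammer symbol `(x)_k = x(x+1)⋯(x+k-1)` for a complex number. -/
noncomputable def pochC (x : ℂ) (k : ℕ) : ℂ := ∏ i ∈ Finset.range k, (x + i)

/-- Gauss hypergeometric series `₂F₁(a,b;c;z)`. -/
noncomputable def hypF (a b c z : ℂ) : ℂ :=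
  ∑' k : ℕ, pochC a k * pochC b k / (pochC c k * (k.factorial : ℂ)) * z ^ k

lemma pochC_zero (x : ℂ) : pochC x 0 = 1 := Finset.prod_range_zero _

lemma pochC_succ (x : ℂ) (k : ℕ) : pochC x (k+1) = pochC x k * (x + k) :=
  Finset.prod_range_succ _ _

lemma pochC_add (x : ℂ) (p q : ℕ) : pochC x (p+q) = pochC x p * pochC (x + p) q := by
  unfold pochC
  rw [Finset.prod_range_add]
  congr 1
  refine Finset.prod_congr rfl fun i _ => ?_
  push_cast
  ring

/-- coefficient of binomial series -/
noncomputable def bc (a : ℂ) (k : ℕ) : ℂ := pochC a k / (k.factorial : ℂ)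

lemma bc_zero (a : ℂ) : bc a 0 = 1 := by simp [bc, pochC_zero]

lemma bc_succ (a : ℂ) (k : ℕ) : ((k:ℂ)+1) * bc a (k+1) = (a + k) * bc a k := by
  unfold bc
  rw [pochC_succ, Nat.factorial_succ]
  push_cast
  have hk : ((k:ℂ)+1) ≠ 0 := by exact_mod_cast (Nat.cast_ne_zero (R := ℂ)).mpr (Nat.succ_ne_zero k)
  have hf : ((k.factorial:ℂ)) ≠ 0 := Nat.cast_ne_zero.2 k.factorial_ne_zero
  field_simp

lemma bc_succ_eq (a : ℂ) (k : ℕ) : bc a (k+1) = (a + k) / ((k:ℂ)+1) * bc a k := by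
  have hk : ((k:ℂ)+1) ≠ 0 := by
    exact_mod_cast (Nat.cast_ne_zero (R := ℂ)).mpr (Nat.succ_ne_zero k)
  field_simp
  rw [mul_comm]
  exact bc_succ a k

lemma norm_natCast_add_one (n : ℕ) : ‖((n:ℂ)+1)‖ = (n:ℝ)+1 := by
  rw [show ((n:ℂ)+1) = ((n+1:ℕ):ℂ) by push_cast; ring, Complex.norm_natCast]
  push_cast; ring

lemma summable_bc (a : ℂ) {z : ℂ} (hz : ‖z‖ < 1) : Summable (fun k => bc a k * z ^ k) := by
  set ρ := ‖z‖ with hρ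
  have hρ0 : 0 ≤ ρ := norm_nonneg z
  set d : ℝ := (1 - ρ) / 2 with hd
  have hd0 : 0 < d := by rw [hd]; linarith
  set r : ℝ := ρ + d with hr
  have hr1 : r < 1 := by rw [hr, hd]; linarith
  refine summable_of_ratio_norm_eventually_le hr1 ?_
  rw [Filter.eventually_atTop]
  refine ⟨⌈‖a‖ * ρ / d⌉₊, fun n hn => ?_⟩
  have hkey : ‖a‖ * ρ ≤ ((n:ℝ)+1) * d := by
    have h1 : ‖a‖ * ρ / d ≤ (n:ℝ) + 1 := by
      calc ‖a‖ * ρ / d ≤ (⌈‖a‖ * ρ / d⌉₊ : ℝ) := Nat.le_ceil _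
        _ ≤ (n:ℝ) := by exact_mod_cast hn
        _ ≤ (n:ℝ) + 1 := by linarith
    calc ‖a‖ * ρ = (‖a‖ * ρ / d) * d := by field_simp
      _ ≤ ((n:ℝ)+1) * d := by nlinarith
  have heq : ‖bc a (n+1) * z ^ (n+1)‖ = ‖a + n‖ / ((n:ℝ)+1) * ρ * ‖bc a n * z ^ n‖ := by
    rw [bc_succ_eq, pow_succ]
    rw [show (a + ↑n) / (↑n + 1) * bc a n * (z ^ n * z)
        = ((a + ↑n) / (↑n + 1)) * z * (bc a n * z ^ n) by ring]
    rw [norm_mul, norm_mul, norm_div, norm_natCast_add_one]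
  rw [heq]
  have hb : ‖a + n‖ / ((n:ℝ)+1) * ρ ≤ r := by
    rw [div_mul_eq_mul_div, div_le_iff₀ (by positivity)]
    have h2 : ‖a + (n:ℂ)‖ ≤ ‖a‖ + n := by
      calc ‖a + (n:ℂ)‖ ≤ ‖a‖ + ‖(n:ℂ)‖ := norm_add_le _ _
        _ = ‖a‖ + n := by rw [Complex.norm_natCast]
    have h3 : (‖a‖ + n) * ρ ≤ r * ((n:ℝ)+1) := by
      rw [hr]; nlinarith
    nlinarith [norm_nonneg (a + (n:ℂ))]
  exact mul_le_mul_of_nonneg_right hb (norm_nonneg _)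

lemma summable_deriv_bound (a : ℂ) {ρ : ℝ} (h0 : 0 ≤ ρ) (h1 : ρ < 1) :
    Summable (fun n : ℕ => (n:ℝ) * ‖bc a n‖ * ρ ^ (n-1)) := by
  set d : ℝ := (1 - ρ) / 2 with hd
  have hd0 : 0 < d := by rw [hd]; linarith
  set r : ℝ := ρ + d with hr
  have hr1 : r < 1 := by rw [hr, hd]; linarith
  refine summable_of_ratio_norm_eventually_le hr1 ?_
  rw [Filter.eventually_atTop]
  refine ⟨max 1 ⌈‖a‖ * ρ / d⌉₊, fun n hn => ?_⟩
  have hn1 : 1 ≤ n := le_trans (le_max_left _ _) hn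
  have hkey : ‖a‖ * ρ ≤ (n:ℝ) * d := by
    have h1' : ‖a‖ * ρ / d ≤ (n:ℝ) := by
      calc ‖a‖ * ρ / d ≤ (⌈‖a‖ * ρ / d⌉₊ : ℝ) := Nat.le_ceil _
        _ ≤ (n:ℝ) := by exact_mod_cast le_trans (le_max_right _ _) hn
    calc ‖a‖ * ρ = (‖a‖ * ρ / d) * d := by field_simp
      _ ≤ (n:ℝ) * d := by nlinarith
  have hρn : ρ ^ n = ρ ^ (n-1) * ρ := by
    conv_lhs => rw [show n = (n-1) + 1 from (Nat.succ_pred_eq_of_pos hn1).symm]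
    rw [pow_succ]
  have hnormbc : ‖bc a (n+1)‖ = ‖a + n‖ / ((n:ℝ)+1) * ‖bc a n‖ := by
    rw [bc_succ_eq, norm_mul, norm_div, norm_natCast_add_one]
  have e1 : ((n:ℝ)+1) * ‖bc a (n+1)‖ * ρ ^ n = ‖a + n‖ * ‖bc a n‖ * ρ ^ n := by
    rw [hnormbc]; field_simp
  rw [Real.norm_of_nonneg (by positivity), Real.norm_of_nonneg (by positivity)]
  rw [Nat.add_sub_cancel]
  have h2 : ‖a + (n:ℂ)‖ ≤ ‖a‖ + n := by
    calc ‖a + (n:ℂ)‖ ≤ ‖a‖ + ‖(n:ℂ)‖ := norm_add_le _ _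
      _ = ‖a‖ + n := by rw [Complex.norm_natCast]
  have hAB : ‖a + (n:ℂ)‖ * ρ ≤ r * n := by
    rw [hr]; nlinarith [norm_nonneg (a + (n:ℂ))]
  have e2 : ((n+1:ℕ):ℝ) * ‖bc a (n+1)‖ * ρ ^ n = (‖a + (n:ℂ)‖ * ρ) * (‖bc a n‖ * ρ ^ (n-1)) := by
    push_cast
    rw [e1, hρn]; ring
  rw [e2]
  calc (‖a + (n:ℂ)‖ * ρ) * (‖bc a n‖ * ρ ^ (n-1))
      ≤ (r * n) * (‖bc a n‖ * ρ ^ (n-1)) :=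
        mul_le_mul_of_nonneg_right hAB (by positivity)
    _ = r * ((n:ℝ) * ‖bc a n‖ * ρ ^ (n-1)) := by ring


/-- Binomial series sum -/
noncomputable def binF (a : ℂ) (z : ℂ) : ℂ := ∑' k : ℕ, bc a k * z ^ k

lemma hasDerivAt_binF (a : ℂ) {y : ℂ} (hy : ‖y‖ < 1) :
    HasDerivAt (binF a) (∑' k : ℕ, bc a k * ((k:ℂ) * y ^ (k-1))) y := by
  set ρ : ℝ := (1 + ‖y‖) / 2 with hρ
  have hyρ : ‖y‖ < ρ := by rw [hρ]; linarith
  have hρ0 : 0 ≤ ρ := le_trans (norm_nonneg y) hyρ.le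
  have hρ1 : ρ < 1 := by rw [hρ]; linarith
  have hu := summable_deriv_bound a hρ0 hρ1
  refine hasDerivAt_tsum_of_isPreconnected hu (Metric.isOpen_ball)
    ((convex_ball (0:ℂ) ρ).isPreconnected)
    (g := fun n z => bc a n * z ^ n)
    (g' := fun n z => bc a n * ((n:ℂ) * z ^ (n-1)))
    (y₀ := 0) ?_ ?_ ?_ ?_ ?_
  · intro n x _
    exact (hasDerivAt_pow n x).const_mul (bc a n)
  · intro n x hx
    rw [Metric.mem_ball, dist_zero_right] at hx
    rw [norm_mul, norm_mul, Complex.norm_natCast, norm_pow]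
    calc ‖bc a n‖ * ((n:ℝ) * ‖x‖ ^ (n-1)) ≤ ‖bc a n‖ * ((n:ℝ) * ρ ^ (n-1)) := by
          have hxρ : ‖x‖ ≤ ρ := hx.le
          gcongr
      _ = (n:ℝ) * ‖bc a n‖ * ρ ^ (n-1) := by ring
  · rw [Metric.mem_ball, dist_zero_right, norm_zero]
    positivity
  · exact summable_bc a (by simp)
  · rw [Metric.mem_ball, dist_zero_right]; exact hyρ

lemma summable_deriv_term (a : ℂ) {y : ℂ} (hy : ‖y‖ < 1) :
    Summable (fun k : ℕ => bc a k * ((k:ℂ) * y ^ (k-1))) := by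
  set ρ : ℝ := (1 + ‖y‖) / 2 with hρ
  have hyρ : ‖y‖ < ρ := by rw [hρ]; linarith
  have hρ0 : 0 ≤ ρ := le_trans (norm_nonneg y) hyρ.le
  have hρ1 : ρ < 1 := by rw [hρ]; linarith
  refine Summable.of_norm_bounded (summable_deriv_bound a hρ0 hρ1) fun n => ?_
  rw [norm_mul, norm_mul, Complex.norm_natCast, norm_pow]
  rw [show ‖bc a n‖ * ((n:ℝ) * ‖y‖ ^ (n-1)) = (n:ℝ) * ‖bc a n‖ * ‖y‖ ^ (n-1) by ring]
  have hxρ : ‖y‖ ≤ ρ := hyρ.le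
  gcongr

lemma summable_k_bc (a : ℂ) {y : ℂ} (hy : ‖y‖ < 1) :
    Summable (fun k : ℕ => (k:ℂ) * bc a k * y ^ k) := by
  refine ((summable_deriv_term a hy).mul_left y).congr fun k => ?_
  cases k with
  | zero => simp
  | succ n =>
    rw [Nat.add_sub_cancel]
    push_cast
    ring

lemma ode_binF (a : ℂ) {y : ℂ} (hy : ‖y‖ < 1) :
    (1 - y) * (∑' k : ℕ, bc a k * ((k:ℂ) * y ^ (k-1))) = a * binF a y := by
  set D : ℂ := ∑' k : ℕ, bc a k * ((k:ℂ) * y ^ (k-1)) with hD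
  have S2 := summable_deriv_term a hy
  have S1 := summable_bc a hy
  have S3 := summable_k_bc a hy
  have S4 : Summable (fun k : ℕ => (a + k) * bc a k * y ^ k) := by
    refine ((S1.mul_left a).add S3).congr fun k => ?_
    ring
  -- D = ∑' k, (a+k) * bc a k * y^k
  have hD2 : D = ∑' k : ℕ, (a + k) * bc a k * y ^ k := by
    rw [hD, Summable.tsum_eq_zero_add S2]
    simp only [Nat.cast_zero, zero_mul, mul_zero, zero_add]
    refine tsum_congr fun k => ?_
    rw [Nat.add_sub_cancel]
    push_cast
    linear_combination y ^ k * bc_succ a k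
  have hyD : y * D = ∑' k : ℕ, (k:ℂ) * bc a k * y ^ k := by
    rw [hD, ← tsum_mul_left]
    refine tsum_congr fun k => ?_
    cases k with
    | zero => simp
    | succ n =>
      rw [Nat.add_sub_cancel]
      push_cast
      ring
  calc (1 - y) * D = D - y * D := by ring
    _ = ∑' k : ℕ, ((a + k) * bc a k * y ^ k - (k:ℂ) * bc a k * y ^ k) := by
        rw [hyD, hD2, Summable.tsum_sub S4 S3]
    _ = ∑' k : ℕ, a * (bc a k * y ^ k) := tsum_congr fun k => by ring
    _ = a * binF a y := by rw [binF, tsum_mul_left]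

lemma one_sub_ne_zero_of_norm_lt {x : ℂ} (hx : ‖x‖ < 1) : (1 : ℂ) - x ≠ 0 := by
  intro h
  have : (1:ℂ) = x := by linear_combination h
  rw [← this] at hx
  simp at hx

lemma one_sub_slit {x : ℂ} (hx : ‖x‖ < 1) : 0 < ((1:ℂ) - x).re ∨ ((1:ℂ) - x).im ≠ 0 := by
  left
  have : x.re ≤ ‖x‖ := by
    calc x.re ≤ |x.re| := le_abs_self _
      _ ≤ ‖x‖ := Complex.abs_re_le_norm x
      _ = ‖x‖ := rfl
  simp only [Complex.sub_re, Complex.one_re]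
  linarith

lemma binF_mul (a : ℂ) {z : ℂ} (hz : ‖z‖ < 1) : binF a z * (1 - z) ^ a = 1 := by
  set h : ℂ → ℂ := fun w => binF a w * (1 - w) ^ a with hh
  have key : ∀ x ∈ Metric.ball (0:ℂ) 1, HasDerivAt h 0 x := by
    intro x hx
    rw [Metric.mem_ball, dist_zero_right] at hx
    have h1 : (1:ℂ) - x ≠ 0 := one_sub_ne_zero_of_norm_lt hx
    have hf := hasDerivAt_binF a hx
    have hg : HasDerivAt (fun w : ℂ => ((1:ℂ) - w) ^ a)
        (a * ((1:ℂ) - x) ^ (a - 1) * (-1)) x := by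
      have hid : HasDerivAt (fun w : ℂ => (1:ℂ) - w) (-1) x := by
        simpa using (hasDerivAt_id x).const_sub 1
      exact hid.cpow_const (one_sub_slit hx)
    have := hf.mul hg
    refine this.congr_deriv (Eq.symm ?_)
    have hsplit : ((1:ℂ) - x) ^ a = ((1:ℂ) - x) ^ (a - 1) * (1 - x) := by
      conv_lhs => rw [show a = (a - 1) + 1 by ring]
      rw [Complex.cpow_add _ _ h1, Complex.cpow_one]
    have hode := ode_binF a hx
    rw [hsplit]
    linear_combination (((1:ℂ)-x) ^ (a-1)) * hode.symm
  have hdiff : DifferentiableOn ℂ h (Metric.ball (0:ℂ) 1) := fun x hx =>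
    ((key x hx).differentiableAt).differentiableWithinAt
  have hfd : ∀ x ∈ Metric.ball (0:ℂ) 1, fderivWithin ℂ h (Metric.ball (0:ℂ) 1) x = 0 := by
    intro x hx
    rw [fderivWithin_of_isOpen Metric.isOpen_ball hx]
    have := (key x hx).hasFDerivAt.fderiv
    rw [this]
    ext
    simp
  have h0 : (0:ℂ) ∈ Metric.ball (0:ℂ) 1 := by simp
  have hzmem : z ∈ Metric.ball (0:ℂ) 1 := by
    rw [Metric.mem_ball, dist_zero_right]; exact hz
  have hconst := (convex_ball (0:ℂ) 1).is_const_of_fderivWithin_eq_zero hdiff hfd hzmem h0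
  have hh0 : h 0 = 1 := by
    rw [hh]
    simp only [sub_zero, Complex.one_cpow, mul_one]
    rw [binF]
    rw [tsum_eq_single 0 (fun k hk => by simp [zero_pow hk])]
    simp [bc_zero]
  calc binF a z * (1 - z) ^ a = h z := rfl
    _ = h 0 := hconst
    _ = 1 := hh0

theorem hasSum_binomial (a : ℂ) {z : ℂ} (hz : ‖z‖ < 1) :
    HasSum (fun k : ℕ => bc a k * z ^ k) (((1:ℂ) - z) ^ (-a)) := by
  have hval : binF a z = ((1:ℂ) - z) ^ (-a) := by
    rw [Complex.cpow_neg]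
    have h := binF_mul a hz
    exact eq_inv_of_mul_eq_one_left h
  have := (summable_bc a hz).hasSum
  rwa [show (∑' k : ℕ, bc a k * z ^ k) = binF a z from rfl, hval] at this

lemma pochC_one_eq (n : ℕ) : pochC 1 n = (n.factorial : ℂ) := by
  induction n with
  | zero => simp [pochC_zero]
  | succ k ih =>
    rw [pochC_succ, ih, Nat.factorial_succ]
    push_cast
    ring

lemma fact_poch (M n : ℕ) : (((n + M).factorial : ℕ) : ℂ)
    = (M.factorial : ℂ) * pochC ((M:ℂ) + 1) n := by
  induction n with
  | zero => simp [pochC_zero]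
  | succ k ih =>
    have : k + 1 + M = (k + M) + 1 := by ring
    rw [this, Nat.factorial_succ, pochC_succ, Nat.cast_mul, ih]
    push_cast
    ring

lemma pochC_reflect (x : ℂ) (M : ℕ) :
    pochC (x - M) M = (-1) ^ M * pochC (1 - x) M := by
  induction M with
  | zero => simp [pochC_zero]
  | succ k ih =>
    have h1 : pochC (x - (k+1:ℕ)) (k+1)
        = (∏ i ∈ Finset.range k, (x - ((k+1:ℕ):ℂ) + (i+1:ℕ))) * (x - ((k+1:ℕ):ℂ) + (0:ℕ)) := by
      unfold pochC
      rw [Finset.prod_range_succ']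
    have h2 : (∏ i ∈ Finset.range k, (x - ((k+1:ℕ):ℂ) + ((i+1:ℕ):ℂ))) = pochC (x - k) k := by
      unfold pochC
      refine Finset.prod_congr rfl fun i _ => ?_
      push_cast
      ring
    rw [h1, h2, ih, pochC_succ]
    push_cast
    ring

lemma pochC_nat_ne_zero (M n : ℕ) : pochC ((M:ℂ) + 1) n ≠ 0 := by
  unfold pochC
  rw [Finset.prod_ne_zero_iff]
  intro i _
  have : ((M:ℂ) + 1 + i) = ((M + 1 + i : ℕ) : ℂ) := by push_cast; ring
  rw [this]
  exact Nat.cast_ne_zero.mpr (by omega)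

/-- Reduction of `F(1,b;m;z)` to elementary functions:
`F(1,b;m;z) = (m-1)! (-z)^{1-m} / (1-b)_{m-1} · [(1-z)^{m-b-1} - ∑_{k=0}^{m-2} (b-m+1)_k/k! z^k]`
for a positive integer `m` with `m - b` not a positive integer, and `0 < |z| < 1`. -/
theorem hyp_one_b_m (m : ℕ) (hm : 1 ≤ m) (b z : ℂ)
    (hb : ∀ j : ℕ, 1 ≤ j → (m : ℂ) - b ≠ (j : ℂ))
    (hz0 : z ≠ 0) (hz : ‖z‖ < 1) :
    hypF 1 b (m : ℂ) z =
      ((m - 1).factorial : ℂ) * (-z) ^ ((1 : ℂ) - (m : ℂ)) / pochC (1 - b) (m - 1) *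
        ((1 - z) ^ ((m : ℂ) - b - 1) -
          ∑ k ∈ Finset.range (m - 1), pochC (b - (m : ℂ) + 1) k / (k.factorial : ℂ) * z ^ k) := by

  obtain ⟨M, rfl⟩ : ∃ M, m = M + 1 := ⟨m - 1, (Nat.succ_pred_eq_of_pos hm).symm⟩
  simp only [Nat.add_sub_cancel]
  have hz' : ‖z‖ < 1 := hz
  set a : ℂ := b - ((M + 1 : ℕ) : ℂ) + 1 with ha_def
  have ha : a = b - (M : ℂ) := by rw [ha_def]; push_cast; ring
  -- nonvanishing of pochC (1-b) M
  have hP : pochC (1 - b) M ≠ 0 := by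
    unfold pochC
    rw [Finset.prod_ne_zero_iff]
    intro i hi
    rw [Finset.mem_range] at hi
    intro h0
    refine hb (M - i) (by omega) ?_
    have : ((M - i : ℕ) : ℂ) = (M : ℂ) - (i : ℂ) := by
      rw [Nat.cast_sub (le_of_lt hi)]
    rw [this]
    push_cast
    linear_combination h0
  -- binomial series
  have hbin := hasSum_binomial a hz'
  have hexp : ((M + 1 : ℕ) : ℂ) - b - 1 = -a := by rw [ha_def]; push_cast; ring
  have hS : Summable (fun k : ℕ => pochC a k / (k.factorial : ℂ) * z ^ k) := hbin.summable
  have htsum : (∑' k : ℕ, pochC a k / (k.factorial : ℂ) * z ^ k) = (1 - z) ^ (-a) :=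
    hbin.tsum_eq
  have htail := Summable.sum_add_tsum_nat_add (f := fun k : ℕ => pochC a k / (k.factorial : ℂ) * z ^ k)
    M hS
  have hbracket : (1 - z) ^ (((M + 1 : ℕ) : ℂ) - b - 1) -
      ∑ k ∈ Finset.range M, pochC (b - ((M + 1 : ℕ) : ℂ)  + 1) k / (k.factorial : ℂ) * z ^ k
      = ∑' k : ℕ, pochC a (k + M) / ((k + M).factorial : ℂ) * z ^ (k + M) := by
    rw [hexp, ← htsum, ← htail]
    ring
  rw [hbracket]
  -- LHS simplification
  have hL : hypF 1 b (((M + 1 : ℕ) : ℂ)) z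
      = ∑' n : ℕ, pochC b n / pochC ((M : ℂ) + 1) n * z ^ n := by
    unfold hypF
    refine tsum_congr fun n => ?_
    rw [pochC_one_eq]
    have hfac : ((n.factorial : ℕ) : ℂ) ≠ 0 := Nat.cast_ne_zero.mpr n.factorial_ne_zero
    have hcast : ((M + 1 : ℕ) : ℂ) = (M : ℂ) + 1 := by push_cast; ring
    rw [hcast, mul_comm (pochC ((M:ℂ)+1) n) ((n.factorial : ℕ) : ℂ),
      mul_div_mul_left _ _ hfac]
  rw [hL, ← tsum_mul_left]
  refine tsum_congr fun n => ?_
  -- termwise identity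
  have hfact := fact_poch M n
  have hpochadd : pochC a (n + M) = pochC a M * pochC b n := by
    rw [Nat.add_comm, pochC_add]
    congr 1
    rw [ha]
    ring_nf
  have hrefl : pochC a M = (-1) ^ M * pochC (1 - b) M := by
    rw [ha_def, show b - ((M + 1 : ℕ) : ℂ) + 1 = b - (M:ℂ) by push_cast; ring]
    exact pochC_reflect b M
  have hpow : (-z) ^ ((1 : ℂ) - ((M + 1 : ℕ) : ℂ)) = ((-1 : ℂ) ^ M * z ^ M)⁻¹ := by
    have h1 : ((1 : ℂ) - ((M + 1 : ℕ) : ℂ)) = ((-(M : ℤ) : ℤ) : ℂ) := by push_cast; ring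
    rw [h1, Complex.cpow_intCast, zpow_neg, zpow_natCast, neg_pow]
  have hMfac : ((M.factorial : ℕ) : ℂ) ≠ 0 := Nat.cast_ne_zero.mpr M.factorial_ne_zero
  have hpn : pochC ((M : ℂ) + 1) n ≠ 0 := pochC_nat_ne_zero M n
  have hzM : z ^ M ≠ 0 := pow_ne_zero _ hz0
  have hneg1 : ((-1 : ℂ)) ^ M ≠ 0 := pow_ne_zero _ (by norm_num)
  rw [hpow, hpochadd, hrefl, hfact]
  field_simp
  ring
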